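/- arXiv:1803.11275 — 5 statements merged into one kernel-verified Lean document; each statement's English description precedes it below -/
import Mathlib

section
/- Let G be a simple graph on n vertices with adjacency matrix A and walk matrix W, and let W̄ be the walk matrix of the complement Ḡ of G (with the same vertex ordering). Then det(W̄) = (−1)^{n(n−1)/2} · det(W). -/
open Matrix

open scoped Classical in
/-- The 0/1 adjacency matrix of a simple graph, over the integers. -/
noncomputable def adjMat {V : Type*} [Fintype V] (G : SimpleGraph V) : Matrix V V ℤ :=
  Matrix.of fun u v => if G.Adj u v then (1 : ℤ) else 0

/-- The walk matrix of a simple graph on `Fin n`: its `j`-th column is ``A^j e``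
where `e` is the all-ones vector. -/
noncomputable def walkMat {n : ℕ} (G : SimpleGraph (Fin n)) : Matrix (Fin n) (Fin n) ℤ :=
  Matrix.of fun i j => ((adjMat G ^ (j : ℕ)) *ᵥ fun _ => (1 : ℤ)) i

/-- `G ∪ w`: adjoin a new vertex (labelled `0`) adjacent to no vertex of `G`;
the original vertex `i` of `G` becomes `i.succ`. -/
def unionVertex {n : ℕ} (G : SimpleGraph (Fin n)) : SimpleGraph (Fin (n + 1)) where
  Adj u v := ∃ i j : Fin n, u = i.succ ∧ v = j.succ ∧ G.Adj i j
  symm := by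
    constructor
    rintro u v ⟨i, j, hu, hv, h⟩
    exact ⟨j, i, hv, hu, h.symm⟩
  loopless := by
    constructor
    rintro u ⟨i, j, rfl, hv, h⟩
    obtain rfl : i = j := Fin.succ_inj.mp hv
    exact G.irrefl h

/-- `G ∨ w`: adjoin a new vertex (labelled `0`) adjacent to every vertex of `G`;
the original vertex `i` of `G` becomes `i.succ`. -/
def joinVertex {n : ℕ} (G : SimpleGraph (Fin n)) : SimpleGraph (Fin (n + 1)) where
  Adj u v := (u = 0 ∧ v ≠ 0) ∨ (v = 0 ∧ u ≠ 0) ∨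
    ∃ i j : Fin n, u = i.succ ∧ v = j.succ ∧ G.Adj i j
  symm := by
    constructor
    rintro u v (⟨h1, h2⟩ | ⟨h1, h2⟩ | ⟨i, j, hu, hv, h⟩)
    · exact Or.inr (Or.inl ⟨h1, h2⟩)
    · exact Or.inl ⟨h1, h2⟩
    · exact Or.inr (Or.inr ⟨j, i, hv, hu, h.symm⟩)
  loopless := by
    constructor
    rintro u (⟨h1, h2⟩ | ⟨h1, h2⟩ | ⟨i, j, rfl, hv, h⟩)
    · exact h2 h1
    · exact h2 h1
    · obtain rfl : i = j := Fin.succ_inj.mp hv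
      exact G.irrefl h

/-- The sequence `G₀, G₁, G₂, …` where `Gᵢ = G_{i-1} ∪ wᵢ` for odd `i` and
`Gᵢ = G_{i-1} ∨ wᵢ` for even `i ≥ 2`. -/
def seqGraph {n0 : ℕ} (G0 : SimpleGraph (Fin n0)) : (i : ℕ) → SimpleGraph (Fin (n0 + i))
  | 0 => G0
  | (i + 1) => if (i + 1) % 2 = 1 then unionVertex (seqGraph G0 i) else joinVertex (seqGraph G0 i)

/-- A graph is determined by its generalized spectrum. -/
def IsDGS {n : ℕ} (G : SimpleGraph (Fin n)) : Prop :=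
  ∀ H : SimpleGraph (Fin n),
    (adjMat H).charpoly = (adjMat G).charpoly →
    (adjMat Hᶜ).charpoly = (adjMat Gᶜ).charpoly →
    Nonempty (H ≃g G)


open Polynomial in
lemma adjMat_compl_mulVec {n : ℕ} (G : SimpleGraph (Fin n)) (v : Fin n → ℤ) :
    adjMat Gᶜ *ᵥ v = (∑ u, v u) • (fun _ => (1:ℤ)) - v - adjMat G *ᵥ v := by
  funext i
  have hentry : ∀ j, adjMat Gᶜ i j = 1 - (if i = j then (1:ℤ) else 0) - adjMat G i j := by
    intro j
    simp only [adjMat, Matrix.of_apply, SimpleGraph.compl_adj]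
    by_cases h1 : i = j
    · subst h1; simp [G.loopless.irrefl i]
    · by_cases h2 : G.Adj i j <;> simp [h1, h2]
  simp only [mulVec, dotProduct, hentry, Pi.sub_apply, Pi.smul_apply, smul_eq_mul, mul_one]
  rw [Finset.sum_congr rfl (fun j _ => by ring :
    ∀ j ∈ Finset.univ, (1 - (if i = j then (1:ℤ) else 0) - adjMat G i j) * v j
      = v j - (if i = j then (1:ℤ) else 0) * v j - adjMat G i j * v j)]
  rw [Finset.sum_sub_distrib, Finset.sum_sub_distrib]
  congr 1
  congr 1
  simp

open Polynomial in
lemma key_poly {n : ℕ} (G : SimpleGraph (Fin n)) (j : ℕ) :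
    ∃ q : ℤ[X], q.natDegree ≤ j ∧ q.coeff j = (-1)^j ∧
      (adjMat Gᶜ)^j *ᵥ (fun _ => (1:ℤ)) = (aeval (adjMat G) q) *ᵥ (fun _ => (1:ℤ)) := by
  induction j with
  | zero => exact ⟨1, by simp, by simp, by simp⟩
  | succ j ih =>
    obtain ⟨q, hdeg, hcoeff, heq⟩ := ih
    set A := adjMat G
    set e : Fin n → ℤ := fun _ => (1:ℤ) with he
    set s : ℤ := ∑ u, ((aeval A q) *ᵥ e) u with hs
    refine ⟨C s - q - X * q, ?_, ?_, ?_⟩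
    · have h1 : (C s - q).natDegree ≤ j + 1 :=
        le_trans (natDegree_sub_le _ _) (by simp [natDegree_C]; omega)
      have h2 : (X * q).natDegree ≤ j + 1 :=
        le_trans (natDegree_mul_le) (by simp [natDegree_X]; omega)
      exact le_trans (natDegree_sub_le _ _) (max_le h1 h2)
    · have h1 : (C s).coeff (j+1) = 0 := by
        rw [coeff_C]; simp
      have h2 : q.coeff (j+1) = 0 := coeff_eq_zero_of_natDegree_lt (by omega)
      have h3 : (X * q).coeff (j+1) = q.coeff j := coeff_X_mul q j
      rw [coeff_sub, coeff_sub, h1, h2, h3, hcoeff, pow_succ]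
      ring
    · have hstep : (adjMat Gᶜ)^(j+1) *ᵥ e = adjMat Gᶜ *ᵥ ((adjMat Gᶜ)^j *ᵥ e) := by
        rw [pow_succ', Matrix.mulVec_mulVec]
      rw [hstep, heq, adjMat_compl_mulVec]
      have haev : aeval A (C s - q - X * q) = (s • (1 : Matrix (Fin n) (Fin n) ℤ)) -
          aeval A q - A * aeval A q := by
        rw [map_sub, map_sub, _root_.map_mul, aeval_X, aeval_C,
          Algebra.algebraMap_eq_smul_one]
      rw [haev, Matrix.sub_mulVec, Matrix.sub_mulVec,
        Matrix.smul_mulVec, Matrix.one_mulVec, ← Matrix.mulVec_mulVec]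

open Polynomial in
/-- det(W̄) = (−1)^{n(n−1)/2} · det(W). -/
theorem det_walkMat_compl {n : ℕ} (G : SimpleGraph (Fin n)) :
    (walkMat Gᶜ).det = (-1 : ℤ) ^ (n * (n - 1) / 2) * (walkMat G).det := by
  classical
  rcases Nat.eq_zero_or_pos n with hn | hn
  · subst hn
    simp [Matrix.det_fin_zero]
  set A := adjMat G with hA
  set e : Fin n → ℤ := fun _ => (1:ℤ) with he
  choose q hdeg hcoeff heq using fun j : Fin n => key_poly G (j : ℕ)
  set Cm : Matrix (Fin n) (Fin n) ℤ := Matrix.of fun i j => (q j).coeff (i : ℕ) with hCm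
  have hW : walkMat Gᶜ = walkMat G * Cm := by
    ext i j
    rw [Matrix.mul_apply]
    show ((adjMat Gᶜ)^(j:ℕ) *ᵥ e) i = _
    rw [heq j]
    have hq : aeval A (q j) = ∑ k ∈ Finset.range n, (q j).coeff k • A ^ k :=
      aeval_eq_sum_range' (lt_of_le_of_lt (hdeg j) j.2) A
    have lhs : ((∑ k ∈ Finset.range n, (q j).coeff k • A ^ k) *ᵥ e) i
        = ∑ k ∈ Finset.range n, (q j).coeff k * ((A ^ k *ᵥ e) i) := by
      simp only [mulVec, dotProduct, Matrix.sum_apply, Matrix.smul_apply, smul_eq_mul,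
        mul_one, Finset.sum_mul, Finset.mul_sum]
      rw [Finset.sum_comm]
      simp [mul_assoc]
    rw [show (aeval A (q j) *ᵥ fun _ => (1:ℤ)) i = ((∑ k ∈ Finset.range n,
        (q j).coeff k • A ^ k) *ᵥ e) i by rw [hq]]
    rw [lhs, ← Fin.sum_univ_eq_sum_range (fun k => (q j).coeff k * ((A ^ k *ᵥ e) i))]
    refine Finset.sum_congr rfl fun k _ => ?_
    simp only [walkMat, hCm, Matrix.of_apply, hA]
    ring
  have htri : Cm.BlockTriangular id := by
    intro i j hij
    exact coeff_eq_zero_of_natDegree_lt (lt_of_le_of_lt (hdeg j) hij)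
  have hCdet : Cm.det = (-1 : ℤ) ^ (n * (n - 1) / 2) := by
    rw [Matrix.det_of_upperTriangular htri]
    have hd : ∀ i : Fin n, Cm i i = (-1 : ℤ) ^ (i : ℕ) := fun i => hcoeff i
    rw [Finset.prod_congr rfl (fun i _ => hd i), Finset.prod_pow_eq_pow_sum]
    congr 1
    rw [Fin.sum_univ_eq_sum_range (fun k => k), Finset.sum_range_id]
  rw [hW, Matrix.det_mul, hCdet, mul_comm]
end

section
/- A simple graph G is controllable if and only if its complement Ḡ is controllable. -/
open Matrix

/-- coefficients expressing powers of the complement adjacency applied to the all-ones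
vector in terms of powers of the adjacency applied to the all-ones vector. -/
def coefC (s : ℕ → ℤ) : ℕ → ℕ → ℤ
  | 0, 0 => 1
  | 0, _+1 => 0
  | j+1, 0 => s j - coefC s j 0
  | j+1, k+1 => - coefC s j (k+1) - coefC s j k

lemma coefC_eq_zero (s : ℕ → ℤ) : ∀ j k, j < k → coefC s j k = 0 := by
  intro j
  induction j with
  | zero => intro k hk; match k, hk with | (k+1), _ => rfl
  | succ j ih =>
    intro k hk
    match k, hk with
    | (k+1), hk =>
      show - coefC s j (k+1) - coefC s j k = 0
      rw [ih (k+1) (by omega), ih k (by omega)]; ring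

lemma coefC_diag (s : ℕ → ℤ) : ∀ j, coefC s j j = (-1) ^ j := by
  intro j
  induction j with
  | zero => rfl
  | succ j ih =>
    show - coefC s j (j+1) - coefC s j j = (-1)^(j+1)
    rw [coefC_eq_zero s j (j+1) (by omega), ih]; ring

variable {n : ℕ}

lemma adjMat_compl (G : SimpleGraph (Fin n)) :
    adjMat Gᶜ = (Matrix.of fun _ _ => (1:ℤ)) - 1 - adjMat G := by
  classical
  ext u v
  simp only [adjMat, of_apply, SimpleGraph.compl_adj, Matrix.sub_apply, Matrix.one_apply]
  by_cases h : u = v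
  · subst h; simp [G.loopless.irrefl u]
  · by_cases ha : G.Adj u v <;> simp [h, ha]

lemma key (G : SimpleGraph (Fin n)) (j : ℕ) :
    (adjMat Gᶜ ^ j) *ᵥ (fun _ => (1:ℤ)) =
      ∑ k ∈ Finset.range (j+1),
        coefC (fun i => ∑ x, ((adjMat Gᶜ ^ i) *ᵥ (fun _ => (1:ℤ))) x) j k •
          ((adjMat G ^ k) *ᵥ (fun _ => (1:ℤ))) := by
  set s : ℕ → ℤ := fun i => ∑ x, ((adjMat Gᶜ ^ i) *ᵥ (fun _ => (1:ℤ))) x with hs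
  set e : Fin n → ℤ := fun _ => (1:ℤ) with he
  induction j with
  | zero =>
    rw [Finset.range_one, Finset.sum_singleton]
    rw [pow_zero, pow_zero, one_mulVec, show coefC s 0 0 = 1 from rfl, one_smul]
  | succ j ih =>
    have h1 : (adjMat Gᶜ ^ (j+1)) *ᵥ e = adjMat Gᶜ *ᵥ ((adjMat Gᶜ ^ j) *ᵥ e) := by
      rw [mulVec_mulVec, ← pow_succ']
    have hJ : (Matrix.of fun _ _ => (1:ℤ)) *ᵥ ((adjMat Gᶜ ^ j) *ᵥ e) = s j • e := by
      funext i
      simp [mulVec, dotProduct, hs, he, Finset.smul_sum]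
    have hsplit : ∀ v : Fin n → ℤ, adjMat Gᶜ *ᵥ v =
        (Matrix.of fun _ _ => (1:ℤ)) *ᵥ v - v - adjMat G *ᵥ v := by
      intro v
      rw [adjMat_compl G, sub_mulVec, sub_mulVec, one_mulVec]
    rw [h1, hsplit, hJ]
    rw [ih]
    have hA : adjMat G *ᵥ (∑ k ∈ Finset.range (j+1), coefC s j k • ((adjMat G ^ k) *ᵥ e))
        = ∑ k ∈ Finset.range (j+1), coefC s j k • ((adjMat G ^ (k+1)) *ᵥ e) := by
      rw [show (adjMat G *ᵥ _) = (adjMat G).mulVecLin _ from rfl, map_sum]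
      refine Finset.sum_congr rfl fun k _ => ?_
      rw [_root_.map_smul, mulVecLin_apply, mulVec_mulVec, ← pow_succ']
    rw [hA]
    -- now pure algebra on sums
    have hcoef0 : coefC s (j+1) 0 = s j - coefC s j 0 := rfl
    have hcoefS : ∀ k, coefC s (j+1) (k+1) = - coefC s j (k+1) - coefC s j k := fun k => rfl
    rw [Finset.sum_range_succ' (f := fun k => coefC s (j+1) k • ((adjMat G ^ k) *ᵥ e)) (n := j+1)]
    simp only [hcoefS, hcoef0, pow_zero, one_mulVec, sub_smul, neg_smul]
    rw [Finset.sum_sub_distrib]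
    rw [Finset.sum_range_succ (f := fun k => -(coefC s j (k+1) • ((adjMat G ^ (k+1)) *ᵥ e)))]
    rw [coefC_eq_zero s j (j+1) (by omega), zero_smul, neg_zero, add_zero]
    rw [Finset.sum_range_succ' (f := fun k => coefC s j k • ((adjMat G ^ k) *ᵥ e))]
    simp only [pow_zero, one_mulVec]
    rw [Finset.sum_neg_distrib]
    abel

noncomputable def Tmat (G : SimpleGraph (Fin n)) : Matrix (Fin n) (Fin n) ℤ :=
  Matrix.of fun i j =>
    coefC (fun i => ∑ x, ((adjMat Gᶜ ^ i) *ᵥ (fun _ => (1:ℤ))) x) (j : ℕ) (i : ℕ)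

lemma walkMat_compl_factor (G : SimpleGraph (Fin n)) :
    walkMat Gᶜ = walkMat G * Tmat G := by
  set s : ℕ → ℤ := fun i => ∑ x, ((adjMat Gᶜ ^ i) *ᵥ (fun _ => (1:ℤ))) x with hs
  ext i j
  rw [Matrix.mul_apply]
  have h := congrFun (key G (j : ℕ)) i
  simp only [Finset.sum_apply, Pi.smul_apply, smul_eq_mul] at h
  show walkMat Gᶜ i j = _
  rw [show walkMat Gᶜ i j = ((adjMat Gᶜ ^ (j:ℕ)) *ᵥ (fun _ => (1:ℤ))) i from rfl, h]
  have hrhs : ∑ k : Fin n, walkMat G i k * Tmat G k j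
      = ∑ k ∈ Finset.range n, ((adjMat G ^ k) *ᵥ (fun _ => (1:ℤ))) i * coefC s j k := by
    rw [← Fin.sum_univ_eq_sum_range (fun k => ((adjMat G ^ k) *ᵥ (fun _ => (1:ℤ))) i * coefC s j k)]
    rfl
  rw [hrhs]
  rw [Finset.sum_subset (Finset.range_subset_range.2 (Nat.succ_le_of_lt j.isLt))]
  · exact Finset.sum_congr rfl fun k _ => mul_comm _ _
  · intro k _ hk
    rw [coefC_eq_zero s (j:ℕ) k (by simpa using hk), zero_mul]


/-- a graph is controllable iff its complement is controllable. -/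
theorem controllable_iff_compl_controllable {n : ℕ} (G : SimpleGraph (Fin n)) :
    (walkMat G).det ≠ 0 ↔ (walkMat Gᶜ).det ≠ 0 := by
  have hT : (Tmat G).BlockTriangular id := by
    intro i j hij
    exact coefC_eq_zero _ _ _ hij
  have hdetT : (Tmat G).det ≠ 0 := by
    rw [Matrix.det_of_upperTriangular hT]
    refine Finset.prod_ne_zero_iff.2 fun i _ => ?_
    rw [show Tmat G i i = coefC _ (i:ℕ) (i:ℕ) from rfl, coefC_diag]
    exact pow_ne_zero _ (by norm_num)
  rw [walkMat_compl_factor G, Matrix.det_mul]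
  constructor
  · exact fun h => mul_ne_zero h hdetT
  · intro h hG
    exact h (by rw [hG, zero_mul])
end

section
/- Let G be a simple graph with adjacency matrix A, and let G ∪ w be the graph obtained from G by adding a new isolated vertex w. Then G ∪ w is controllable if and only if G is controllable and det(A) ≠ 0 (i.e., G is not singular). -/
open Matrix

lemma adjU_zero_left {n : ℕ} (G : SimpleGraph (Fin n)) (l : Fin (n + 1)) :
    adjMat (unionVertex G) 0 l = 0 := by
  classical
  simp only [adjMat, Matrix.of_apply]
  rw [if_neg]
  rintro ⟨i, j, hi, -, -⟩
  exact (Fin.succ_ne_zero i) hi.symm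

lemma adjU_succ_zero {n : ℕ} (G : SimpleGraph (Fin n)) (l : Fin (n + 1)) :
    adjMat (unionVertex G) l 0 = 0 := by
  classical
  simp only [adjMat, Matrix.of_apply]
  rw [if_neg]
  rintro ⟨i, j, -, hj, -⟩
  exact (Fin.succ_ne_zero j) hj.symm

lemma adjU_succ_succ {n : ℕ} (G : SimpleGraph (Fin n)) (i j : Fin n) :
    adjMat (unionVertex G) i.succ j.succ = adjMat G i j := by
  classical
  simp only [adjMat, Matrix.of_apply]
  by_cases h : G.Adj i j
  · rw [if_pos ⟨i, j, rfl, rfl, h⟩, if_pos h]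
  · rw [if_neg, if_neg h]
    rintro ⟨a, b, ha, hb, hab⟩
    obtain rfl := Fin.succ_inj.mp ha
    obtain rfl := Fin.succ_inj.mp hb
    exact h hab

lemma powU_zero {n : ℕ} (G : SimpleGraph (Fin n)) (k : ℕ) (hk : k ≠ 0) :
    ((adjMat (unionVertex G)) ^ k *ᵥ fun _ => (1 : ℤ)) 0 = 0 := by
  obtain ⟨m, rfl⟩ := Nat.exists_eq_succ_of_ne_zero hk
  rw [pow_succ', ← Matrix.mulVec_mulVec]
  simp [Matrix.mulVec, dotProduct, adjU_zero_left]

lemma powU_succ {n : ℕ} (G : SimpleGraph (Fin n)) (k : ℕ) (i : Fin n) :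
    ((adjMat (unionVertex G)) ^ k *ᵥ fun _ => (1 : ℤ)) i.succ
      = ((adjMat G) ^ k *ᵥ fun _ => (1 : ℤ)) i := by
  induction k generalizing i with
  | zero => simp
  | succ m ih =>
    rw [pow_succ', pow_succ', ← Matrix.mulVec_mulVec, ← Matrix.mulVec_mulVec]
    simp only [Matrix.mulVec, dotProduct]
    rw [Fin.sum_univ_succ, adjU_succ_zero, zero_mul, zero_add]
    refine Finset.sum_congr rfl fun j _ => ?_
    rw [adjU_succ_succ]
    congr 1
    simpa [Matrix.mulVec, dotProduct] using ih j

/-- `G ∪ w` is controllable iff `G` is controllable and `G` is not singular. -/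
theorem unionVertex_controllable_iff {n : ℕ} (G : SimpleGraph (Fin n)) :
    (walkMat (unionVertex G)).det ≠ 0 ↔ (walkMat G).det ≠ 0 ∧ (adjMat G).det ≠ 0 := by
  have hsub : (walkMat (unionVertex G)).submatrix Fin.succ Fin.succ
      = adjMat G * walkMat G := by
    ext i j
    have h1 : walkMat (unionVertex G) i.succ j.succ
        = ((adjMat G) ^ ((j : ℕ) + 1) *ᵥ fun _ => (1 : ℤ)) i := by
      simp only [walkMat, Matrix.of_apply, Fin.val_succ]
      exact powU_succ G _ i
    have h2 : (adjMat G * walkMat G) i j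
        = ((adjMat G) ^ ((j : ℕ) + 1) *ᵥ fun _ => (1 : ℤ)) i := by
      rw [pow_succ', ← Matrix.mulVec_mulVec]
      simp [Matrix.mul_apply, Matrix.mulVec, dotProduct, walkMat]
    simp only [Matrix.submatrix_apply]
    rw [h1, h2]
  have hrow : ∀ j : Fin (n + 1), walkMat (unionVertex G) 0 j
      = if j = 0 then 1 else 0 := by
    intro j
    by_cases hj : j = 0
    · subst hj; simp [walkMat]
    · rw [if_neg hj]
      simp only [walkMat, Matrix.of_apply]
      exact powU_zero G _ (fun h => hj (Fin.ext h))
  have hdet : (walkMat (unionVertex G)).det = (adjMat G).det * (walkMat G).det := by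
    rw [Matrix.det_succ_row_zero]
    rw [Finset.sum_eq_single 0]
    · rw [hrow 0, if_pos rfl, Fin.succAbove_zero, hsub, Matrix.det_mul]
      simp
    · intro j _ hj
      rw [hrow j, if_neg hj, mul_zero, zero_mul]
    · intro h; exact absurd (Finset.mem_univ 0) h
  rw [hdet, mul_ne_zero_iff, and_comm]
end

section
/- Let H be a simple graph with complement H̄. Then the complement of the graph (H ∨ u) ∪ w is isomorphic to (H̄ ∪ u) ∨ w (via the identity map on vertices), and consequently det(A(complement of ((H ∨ u) ∪ w))) = − det(A(H̄)). -/
open Matrix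

lemma part1 {n : ℕ} (H : SimpleGraph (Fin n)) :
    (unionVertex (joinVertex H))ᶜ = joinVertex (unionVertex Hᶜ) := by
  ext u v
  induction u using Fin.cases with
  | zero =>
    induction v using Fin.cases with
    | zero => simp [unionVertex, joinVertex]
    | succ b =>
      simp [unionVertex, joinVertex, Fin.succ_ne_zero, (Fin.succ_ne_zero b).symm]
      exact fun x hx => absurd hx.symm (Fin.succ_ne_zero x)
  | succ a =>
    induction v using Fin.cases with
    | zero =>
      simp [unionVertex, joinVertex, Fin.succ_ne_zero]
      exact fun x hx => absurd hx.symm (Fin.succ_ne_zero x)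
    | succ b =>
      simp only [SimpleGraph.compl_adj, unionVertex, joinVertex, Fin.succ_inj,
        Fin.succ_ne_zero, ne_eq, SimpleGraph.compl_adj]
      induction a using Fin.cases with
      | zero =>
        induction b using Fin.cases with
        | zero =>
          simp
          exact fun x hx => absurd hx.symm (Fin.succ_ne_zero x)
        | succ j =>
          simp [Fin.succ_ne_zero, (Fin.succ_ne_zero j).symm]
          exact fun x hx => absurd hx.symm (Fin.succ_ne_zero x)
      | succ i =>
        induction b using Fin.cases with
        | zero =>
          simp [Fin.succ_ne_zero, (Fin.succ_ne_zero i).symm]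
          exact fun x hx => absurd hx.symm (Fin.succ_ne_zero x)
        | succ j => simp [Fin.succ_inj, Fin.succ_ne_zero]

lemma det_join_union {m : ℕ} (G : SimpleGraph (Fin m)) :
    (adjMat (joinVertex (unionVertex G))).det = - (adjMat G).det := by
  set M := adjMat (joinVertex (unionVertex G)) with hM
  have hone : (1 : Fin (m + 1 + 1)) = Fin.succ 0 := by simp
  have hrow : ∀ j : Fin (m + 2), j ≠ 0 → M 1 j = 0 := by
    intro j hj
    rw [hM, hone]
    simp only [adjMat, Matrix.of_apply, ite_eq_right_iff]
    rintro (⟨h1, h2⟩ | ⟨h1, h2⟩ | ⟨i, k, hi, hk, h⟩)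
    · exact absurd h1 (Fin.succ_ne_zero 0)
    · exact absurd h1 hj
    · obtain rfl : i = 0 := Fin.succ_inj.mp hi.symm
      rcases h with ⟨a, b, ha, hb, h⟩
      exact absurd ha.symm (Fin.succ_ne_zero a)
  have h10 : M 1 0 = 1 := by
    rw [hM, hone]
    simp only [adjMat, Matrix.of_apply]
    rw [if_pos]
    exact Or.inr (Or.inl ⟨rfl, Fin.succ_ne_zero 0⟩)
  set N := M.submatrix ((1 : Fin (m + 2)).succAbove) ((0 : Fin (m + 2)).succAbove) with hN
  have hN00 : N 0 0 = 1 := by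
    rw [hN]
    simp only [Matrix.submatrix_apply]
    rw [hone, Fin.succ_succAbove_zero, Fin.succAbove_zero]
    rw [hM]
    simp only [adjMat, Matrix.of_apply]
    rw [if_pos]
    exact Or.inl ⟨rfl, by rw [← hone]; exact one_ne_zero⟩
  have hNcol : ∀ i : Fin (m + 1), i ≠ 0 → N i 0 = 0 := by
    intro i hi
    obtain ⟨k, rfl⟩ := Fin.exists_succ_eq.mpr hi
    rw [hN]
    simp only [Matrix.submatrix_apply]
    rw [hone, Fin.succ_succAbove_succ, Fin.succAbove_zero, Fin.succAbove_zero, ← hone]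
    rw [hM]
    simp only [adjMat, Matrix.of_apply, ite_eq_right_iff]
    rintro (⟨h1, h2⟩ | ⟨h1, h2⟩ | ⟨a, b, ha, hb, h⟩)
    · exact absurd h1 (Fin.succ_ne_zero _)
    · exact absurd h1 (by rw [hone]; exact Fin.succ_ne_zero 0)
    · obtain rfl : a = k.succ := Fin.succ_inj.mp ha.symm
      obtain rfl : b = 0 := by rw [hone] at hb; exact Fin.succ_inj.mp hb.symm
      rcases h with ⟨c, d, hc, hd, h⟩
      exact absurd hd.symm (Fin.succ_ne_zero d)
  have hsub : N.submatrix ((0 : Fin (m + 1)).succAbove) Fin.succ = adjMat G := by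
    ext i j
    rw [Fin.succAbove_zero, hN]
    simp only [Matrix.submatrix_apply]
    rw [hone, Fin.succ_succAbove_succ, Fin.succAbove_zero, Fin.succAbove_zero]
    rw [hM]
    simp only [adjMat, Matrix.of_apply]
    congr 1
    simp only [eq_iff_iff]
    constructor
    · rintro (⟨h1, h2⟩ | ⟨h1, h2⟩ | ⟨a, b, ha, hb, h⟩)
      · exact absurd h1 (Fin.succ_ne_zero _)
      · exact absurd h1 (Fin.succ_ne_zero _)
      · obtain rfl : a = i.succ := Fin.succ_inj.mp ha.symm
        obtain rfl : b = j.succ := Fin.succ_inj.mp hb.symm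
        rcases h with ⟨c, d, hc, hd, h⟩
        obtain rfl : c = i := Fin.succ_inj.mp hc.symm
        obtain rfl : d = j := Fin.succ_inj.mp hd.symm
        exact h
    · intro h
      exact Or.inr (Or.inr ⟨i.succ, j.succ, rfl, rfl, i, j, rfl, rfl, h⟩)
  rw [Matrix.det_succ_row M 1]
  rw [Finset.sum_eq_single 0]
  · rw [h10, ← hN]
    rw [Matrix.det_succ_column_zero N]
    rw [Finset.sum_eq_single 0]
    · rw [hN00, hsub]
      simp
    · intro i _ hi
      rw [hNcol i hi]
      ring
    · intro h
      exact absurd (Finset.mem_univ 0) h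
  · intro j _ hj
    rw [hrow j hj]
    ring
  · intro h
    exact absurd (Finset.mem_univ 0) h

/-- the complement of `(H ∨ u) ∪ w` is the graph `(H̄ ∪ u) ∨ w`
(the identity map on vertices is an isomorphism, i.e. the two graphs are equal),
and consequently its adjacency matrix has determinant `− det(A(H̄))`. -/
theorem compl_union_join_eq_and_det {n : ℕ} (H : SimpleGraph (Fin n)) :
    (unionVertex (joinVertex H))ᶜ = joinVertex (unionVertex Hᶜ) ∧
      (adjMat ((unionVertex (joinVertex H))ᶜ)).det = - (adjMat Hᶜ).det := by
  have h1 := part1 H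
  exact ⟨h1, by rw [h1]; exact det_join_union Hᶜ⟩
end

section
/- Let G_0, G_1, G_2, … be a sequence of graphs with G_i = G_{i−1} ∪ w_i (adding an isolated vertex) for odd i ≥ 1 and G_i = G_{i−1} ∨ w_i (adding a vertex adjacent to all existing vertices) for even i ≥ 2. Set a = |det(A(G_0))| and p = |det(A(Ḡ_1))|, where Ḡ_1 is the complement of G_1. Then for every i ≥ 0, |det(A(G_{2i}))| = a and |det(A(Ḡ_{2i+1}))| = p. -/
open Matrix

section Aux

open scoped Classical in
lemma adjMat_apply {V : Type*} [Fintype V] (G : SimpleGraph V) (u v : V) :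
    adjMat G u v = if G.Adj u v then (1 : ℤ) else 0 := rfl

lemma unionVertex_adj_succ {n : ℕ} (G : SimpleGraph (Fin n)) (i j : Fin n) :
    (unionVertex G).Adj i.succ j.succ ↔ G.Adj i j := by
  constructor
  · rintro ⟨a, b, ha, hb, h⟩
    obtain rfl : i = a := Fin.succ_inj.mp ha
    obtain rfl : j = b := Fin.succ_inj.mp hb
    exact h
  · intro h; exact ⟨i, j, rfl, rfl, h⟩

lemma unionVertex_not_adj_zero_left {n : ℕ} (G : SimpleGraph (Fin n)) (v : Fin (n + 1)) :
    ¬ (unionVertex G).Adj 0 v := by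
  rintro ⟨a, b, ha, hb, h⟩
  exact (Fin.succ_ne_zero a) ha.symm

lemma unionVertex_not_adj_zero_right {n : ℕ} (G : SimpleGraph (Fin n)) (u : Fin (n + 1)) :
    ¬ (unionVertex G).Adj u 0 := by
  rintro ⟨a, b, ha, hb, h⟩
  exact (Fin.succ_ne_zero b) hb.symm

lemma joinVertex_adj_succ {n : ℕ} (G : SimpleGraph (Fin n)) (i j : Fin n) :
    (joinVertex G).Adj i.succ j.succ ↔ G.Adj i j := by
  constructor
  · rintro (⟨h1, _⟩ | ⟨h1, _⟩ | ⟨a, b, ha, hb, h⟩)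
    · exact absurd h1 (Fin.succ_ne_zero i)
    · exact absurd h1 (Fin.succ_ne_zero j)
    · obtain rfl : i = a := Fin.succ_inj.mp ha
      obtain rfl : j = b := Fin.succ_inj.mp hb
      exact h
  · intro h; exact Or.inr (Or.inr ⟨i, j, rfl, rfl, h⟩)

lemma joinVertex_adj_zero_left {n : ℕ} (G : SimpleGraph (Fin n)) (v : Fin (n + 1)) :
    (joinVertex G).Adj 0 v ↔ v ≠ 0 := by
  constructor
  · rintro (⟨_, h2⟩ | ⟨h1, h2⟩ | ⟨a, b, ha, hb, h⟩)
    · exact h2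
    · exact absurd rfl h2
    · exact absurd ha.symm (Fin.succ_ne_zero a)
  · intro h; exact Or.inl ⟨rfl, h⟩

lemma joinVertex_adj_zero_right {n : ℕ} (G : SimpleGraph (Fin n)) (u : Fin (n + 1)) :
    (joinVertex G).Adj u 0 ↔ u ≠ 0 := by
  rw [(joinVertex G).adj_comm]
  exact joinVertex_adj_zero_left G u

lemma compl_unionVertex {n : ℕ} (G : SimpleGraph (Fin n)) :
    (unionVertex G)ᶜ = joinVertex Gᶜ := by
  ext u v
  rw [SimpleGraph.compl_adj]
  refine Fin.cases ?_ ?_ u <;> [skip; intro i] <;> refine Fin.cases ?_ ?_ v <;>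
    try intro j
  · simp [unionVertex_not_adj_zero_left]
  · simp [unionVertex_not_adj_zero_left, joinVertex_adj_zero_left,
      (Fin.succ_ne_zero j).symm, Fin.succ_ne_zero j]
  · simp [unionVertex_not_adj_zero_right, joinVertex_adj_zero_right,
      Fin.succ_ne_zero i]
  · simp [unionVertex_adj_succ, joinVertex_adj_succ, SimpleGraph.compl_adj,
      Fin.succ_inj, ne_eq]

lemma compl_joinVertex {n : ℕ} (G : SimpleGraph (Fin n)) :
    (joinVertex G)ᶜ = unionVertex Gᶜ := by
  ext u v
  rw [SimpleGraph.compl_adj]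
  refine Fin.cases ?_ ?_ u <;> [skip; intro i] <;> refine Fin.cases ?_ ?_ v <;>
    try intro j
  · simp [unionVertex_not_adj_zero_left]
  · simp [joinVertex_adj_zero_left, unionVertex_not_adj_zero_left,
      (Fin.succ_ne_zero j).symm, Fin.succ_ne_zero j]
  · simp [joinVertex_adj_zero_right, unionVertex_not_adj_zero_right,
      Fin.succ_ne_zero i]
  · simp [unionVertex_adj_succ, joinVertex_adj_succ, SimpleGraph.compl_adj,
      Fin.succ_inj, ne_eq]

lemma det_JU {n : ℕ} (G : SimpleGraph (Fin n)) :
    (adjMat (joinVertex (unionVertex G))).det = -(adjMat G).det := by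
  set M := adjMat (joinVertex (unionVertex G)) with hM
  have hrow : ∀ j : Fin (n + 2), M 1 j = if j = 0 then 1 else 0 := by
    intro j
    refine Fin.cases ?_ (fun k => ?_) j
    · rw [if_pos rfl, hM, adjMat_apply, if_pos]
      rw [← Fin.succ_zero_eq_one]
      exact (joinVertex_adj_zero_right _ _).mpr (Fin.succ_ne_zero 0)
    · rw [if_neg (Fin.succ_ne_zero k), hM, adjMat_apply, if_neg]
      rw [← Fin.succ_zero_eq_one, joinVertex_adj_succ]
      exact unionVertex_not_adj_zero_left G k
  have hN : ∀ i : Fin (n + 1),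
      M ((1 : Fin (n + 2)).succAbove i) ((0 : Fin (n + 2)).succAbove 0)
        = if i = 0 then 1 else 0 := by
    intro i
    refine Fin.cases ?_ (fun k => ?_) i
    · rw [if_pos rfl, hM, adjMat_apply, if_pos]
      rw [← Fin.succ_zero_eq_one, Fin.succ_succAbove_zero, Fin.zero_succAbove]
      exact (joinVertex_adj_zero_left _ _).mpr (Fin.succ_ne_zero 0)
    · rw [if_neg (Fin.succ_ne_zero k), hM, adjMat_apply, if_neg]
      rw [← Fin.succ_zero_eq_one, Fin.succ_succAbove_succ, Fin.zero_succAbove,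
        Fin.zero_succAbove, joinVertex_adj_succ]
      exact unionVertex_not_adj_zero_right G _
  rw [Matrix.det_succ_row M 1]
  rw [Fintype.sum_eq_single (0 : Fin (n + 2)) (fun j hj => by
    rw [hrow j, if_neg hj]; ring)]
  rw [hrow 0, if_pos rfl]
  rw [Matrix.det_succ_column (M.submatrix (1 : Fin (n + 2)).succAbove
      (0 : Fin (n + 2)).succAbove) 0]
  rw [Fintype.sum_eq_single (0 : Fin (n + 1)) (fun i hi => by
    rw [Matrix.submatrix_apply, hN i, if_neg hi]; ring)]
  rw [Matrix.submatrix_apply, hN 0, if_pos rfl]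
  have hsub : ((M.submatrix (1 : Fin (n + 2)).succAbove
      (0 : Fin (n + 2)).succAbove).submatrix (0 : Fin (n + 1)).succAbove
      (0 : Fin (n + 1)).succAbove) = adjMat G := by
    ext i j
    simp only [Matrix.submatrix_apply]
    rw [Fin.zero_succAbove, Fin.zero_succAbove, Fin.zero_succAbove,
      ← Fin.succ_zero_eq_one, Fin.succ_succAbove_succ, Fin.zero_succAbove]
    rw [hM, adjMat_apply, adjMat_apply, joinVertex_adj_succ, unionVertex_adj_succ]
  rw [hsub]
  simp

lemma seqGraph_succ_odd {n0 : ℕ} (G0 : SimpleGraph (Fin n0)) (k : ℕ)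
    (h : (k + 1) % 2 = 1) :
    seqGraph G0 (k + 1) = unionVertex (seqGraph G0 k) := by
  rw [seqGraph, if_pos h]

lemma seqGraph_succ_even {n0 : ℕ} (G0 : SimpleGraph (Fin n0)) (k : ℕ)
    (h : (k + 1) % 2 ≠ 1) :
    seqGraph G0 (k + 1) = joinVertex (seqGraph G0 k) := by
  rw [seqGraph, if_neg h]

end Aux

/-- with `a = |det A(G₀)|` and `p = |det A(Ḡ₁)|`, for every `i ≥ 0` we have
`|det A(G₂ᵢ)| = a` and `|det A(Ḡ₂ᵢ₊₁)| = p`. -/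
theorem natAbs_det_adjMat_seqGraph {n0 : ℕ} (G0 : SimpleGraph (Fin n0)) (i : ℕ) :
    ((adjMat (seqGraph G0 (2 * i))).det).natAbs = ((adjMat G0).det).natAbs ∧
      ((adjMat (seqGraph G0 (2 * i + 1))ᶜ).det).natAbs =
        ((adjMat (seqGraph G0 1)ᶜ).det).natAbs := by
  induction i with
  | zero => exact ⟨rfl, rfl⟩
  | succ i ih =>
    have h1 : seqGraph G0 (2 * i + 1) = unionVertex (seqGraph G0 (2 * i)) :=
      seqGraph_succ_odd G0 (2 * i) (by omega)
    have h2 : seqGraph G0 (2 * i + 1 + 1) = joinVertex (seqGraph G0 (2 * i + 1)) :=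
      seqGraph_succ_even G0 (2 * i + 1) (by omega)
    have h3 : seqGraph G0 (2 * i + 1 + 1 + 1) =
        unionVertex (seqGraph G0 (2 * i + 1 + 1)) :=
      seqGraph_succ_odd G0 (2 * i + 1 + 1) (by omega)
    constructor
    · show ((adjMat (seqGraph G0 (2 * i + 1 + 1))).det).natAbs = _
      rw [h2, h1, det_JU, Int.natAbs_neg]
      exact ih.1
    · show ((adjMat (seqGraph G0 (2 * i + 1 + 1 + 1))ᶜ).det).natAbs = _
      rw [h3, compl_unionVertex, h2, compl_joinVertex, det_JU, Int.natAbs_neg]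
      exact ih.2
end
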